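/- For x ∈ ℝᵐ with all coordinates nonzero, i ≠ j, and n := ‖x‖_p, the off-diagonal partial derivative of HNTanh is ∂yᵢ/∂xⱼ = xᵢ |xⱼ|^{p−1} sign(xⱼ) · ((n(1 − tanh²(n)) − tanh(n))/n²) · n^{1−p}. -/

import Mathlib

lemma tanh_hasDerivAt (y : ℝ) :
    HasDerivAt Real.tanh (1 - Real.tanh y ^ 2) y := by
  have h := (Real.hasDerivAt_sinh y).div (Real.hasDerivAt_cosh y) (Real.cosh_pos y).ne'
  have heq : (fun z => Real.sinh z / Real.cosh z) = Real.tanh := by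
    funext z; rw [Real.tanh_eq_sinh_div_cosh]
  rw [show Real.sinh / Real.cosh = fun z => Real.sinh z / Real.cosh z from rfl, heq] at h
  refine h.congr_deriv ?_
  have hc := (Real.cosh_pos y).ne'
  rw [Real.tanh_eq_sinh_div_cosh]
  have hid := Real.cosh_sq_sub_sinh_sq y
  field_simp

lemma abs_hasDerivAt {a : ℝ} (ha : a ≠ 0) :
    HasDerivAt (fun t : ℝ => |t|) (Real.sign a) a := by
  rcases ha.lt_or_gt with h | h
  · rw [Real.sign_of_neg h]; exact hasDerivAt_abs_neg h
  · rw [Real.sign_of_pos h]; exact hasDerivAt_abs_pos h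

/-- The `p`-norm `‖x‖_p = (Σₗ |xₗ|^p)^(1/p)` on `ℝᵐ`. -/
noncomputable def pnorm (p : ℝ) {m : ℕ} (x : Fin m → ℝ) : ℝ :=
  (∑ l, |x l| ^ p) ^ (1 / p)

/-- Off-diagonal partial derivative of HNTanh: at a point `x` with all coordinates
nonzero, for `i ≠ j`, writing `n = ‖x‖_p`,
`∂yᵢ/∂xⱼ = xᵢ |xⱼ|^{p−1} sign(xⱼ) ((n(1 − tanh²n) − tanh n)/n²) n^{1−p}`. -/
theorem hntanh_offdiag_partial (m : ℕ) (p : ℝ) (hp : 1 < p)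
    (x : Fin m → ℝ) (hx : ∀ k, x k ≠ 0) (i j : Fin m) (hij : i ≠ j) :
    HasDerivAt
      (fun t : ℝ =>
        (Function.update x j t i / pnorm p (Function.update x j t)) *
          Real.tanh (pnorm p (Function.update x j t)))
      (x i * |x j| ^ (p - 1) * Real.sign (x j) *
        ((pnorm p x * (1 - Real.tanh (pnorm p x) ^ 2) - Real.tanh (pnorm p x)) /
          (pnorm p x) ^ 2) * (pnorm p x) ^ (1 - p))
      (x j) := by
  have ha : x j ≠ 0 := hx j
  have hp0 : p ≠ 0 := by positivity
  have hxu : Function.update x j (x j) = x := Function.update_eq_self j x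
  have hsum : ∀ t : ℝ, (∑ l, |Function.update x j t l| ^ p)
      = |t| ^ p + ∑ l ∈ Finset.univ.erase j, |x l| ^ p := by
    intro t
    rw [← Finset.add_sum_erase _ _ (Finset.mem_univ j)]
    congr 1
    · rw [Function.update_self]
    · exact Finset.sum_congr rfl fun l hl => by
        rw [Function.update_of_ne (Finset.ne_of_mem_erase hl)]
  have hSa : 0 < ∑ l, |x l| ^ p := by
    rw [← hxu, hsum]
    have h1 : (0:ℝ) < |x j| ^ p := by positivity
    have h2 : (0:ℝ) ≤ ∑ l ∈ Finset.univ.erase j, |x l| ^ p :=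
      Finset.sum_nonneg fun l _ => by positivity
    linarith
  have hn0 : 0 < pnorm p x := by rw [pnorm]; positivity
  -- derivative of the sum
  have habs : HasDerivAt (fun t : ℝ => |t| ^ p)
      (p * |x j| ^ (p - 1) * Real.sign (x j)) (x j) := by
    have h2 : HasDerivAt (fun y : ℝ => y ^ p) (p * |x j| ^ (p - 1)) |x j| :=
      Real.hasDerivAt_rpow_const (Or.inl (abs_ne_zero.mpr ha))
    exact h2.comp (x j) (abs_hasDerivAt ha)
  have hS : HasDerivAt (fun t : ℝ => ∑ l, |Function.update x j t l| ^ p)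
      (p * |x j| ^ (p - 1) * Real.sign (x j)) (x j) := by
    refine HasDerivAt.congr_of_eventuallyEq
      (habs.add_const (∑ l ∈ Finset.univ.erase j, |x l| ^ p)) ?_
    exact Filter.Eventually.of_forall fun t => hsum t
  -- derivative of N t = pnorm p (update x j t)
  have hpow : (∑ l, |x l| ^ p) ^ (1/p - 1) = (pnorm p x) ^ (1 - p) := by
    rw [pnorm, ← Real.rpow_mul hSa.le]
    congr 1; field_simp
  have h2 : HasDerivAt (fun y : ℝ => y ^ (1/p))
      (1/p * (∑ l, |x l| ^ p) ^ (1/p - 1)) (∑ l, |Function.update x j (x j) l| ^ p) := by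
    rw [hxu]
    exact Real.hasDerivAt_rpow_const (Or.inl hSa.ne')
  have hN : HasDerivAt (fun t : ℝ => pnorm p (Function.update x j t))
      (|x j| ^ (p - 1) * Real.sign (x j) * (pnorm p x) ^ (1 - p)) (x j) := by
    have := h2.comp (x j) hS
    simp only [pnorm]
    refine this.congr_deriv ?_
    have key : ((∑ l, |x l| ^ p) ^ (1/p)) ^ (1-p) = (∑ l, |x l| ^ p) ^ (1/p - 1) := by
      rw [← Real.rpow_mul hSa.le]; congr 1; field_simp
    rw [key]; field_simp
  -- tanh composed with N
  have hT : HasDerivAt (fun t : ℝ => Real.tanh (pnorm p (Function.update x j t)))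
      ((1 - Real.tanh (pnorm p (Function.update x j (x j))) ^ 2) *
        (|x j| ^ (p - 1) * Real.sign (x j) * (pnorm p x) ^ (1 - p))) (x j) :=
    HasDerivAt.comp (h₂ := Real.tanh) (x j) (tanh_hasDerivAt (pnorm p (Function.update x j (x j)))) hN
  rw [hxu] at hT
  have hne : pnorm p (Function.update x j (x j)) ≠ 0 := by rw [hxu]; exact hn0.ne'
  have hdiv := hT.div hN hne
  rw [hxu] at hdiv
  have hfin := hdiv.const_mul (x i)
  have heq : (fun t : ℝ =>
        (Function.update x j t i / pnorm p (Function.update x j t)) *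
          Real.tanh (pnorm p (Function.update x j t))) =
      fun t : ℝ => x i * (Real.tanh (pnorm p (Function.update x j t)) /
          pnorm p (Function.update x j t)) := by
    funext t
    rw [Function.update_of_ne hij]
    ring
  rw [heq]
  refine hfin.congr_deriv ?_
  field_simp
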